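/- For any p×n complex matrix V, the block matrix [[(I_p + VV*)^{-1/2}, V(I_n + V*V)^{-1/2}], [-V*(I_p + VV*)^{-1/2}, (I_n + V*V)^{-1/2}]] is unitary, where M^{-1/2} denotes the inverse of the unique positive definite square root of the positive definite Hermitian matrix M. -/

import Mathlib

open Matrix
open scoped ComplexOrder

/-- The old Mathlib `Matrix.PosSemidef.sqrt` (removed upstream), with its original definition. -/
noncomputable def Matrix.PosSemidef.sqrt {n : Type*} [Fintype n] [DecidableEq n]
    {A : Matrix n n ℂ} (hA : A.PosSemidef) : Matrix n n ℂ :=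
  hA.1.eigenvectorUnitary.1 * diagonal ((↑) ∘ (Real.sqrt ∘ hA.1.eigenvalues)) *
  (star hA.1.eigenvectorUnitary : Matrix n n ℂ)

theorem Matrix.PosSemidef.sqrt_conjTranspose_self' {n : Type*} [Fintype n] [DecidableEq n]
    {A : Matrix n n ℂ} (hA : A.PosSemidef) : hA.sqrtᴴ = hA.sqrt := by
  unfold Matrix.PosSemidef.sqrt
  rw [conjTranspose_mul, conjTranspose_mul, diagonal_conjTranspose, ← star_eq_conjTranspose,
    ← star_eq_conjTranspose, star_star, Matrix.mul_assoc]
  congr 3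
  funext i
  simp

theorem Matrix.PosSemidef.sqrt_mul_self' {n : Type*} [Fintype n] [DecidableEq n]
    {A : Matrix n n ℂ} (hA : A.PosSemidef) : hA.sqrt * hA.sqrt = A := by
  unfold Matrix.PosSemidef.sqrt
  conv_rhs => rw [hA.1.spectral_theorem, Unitary.conjStarAlgAut_apply]
  have hU : (star hA.1.eigenvectorUnitary : Matrix n n ℂ) * hA.1.eigenvectorUnitary.1 = 1 :=
    Unitary.star_mul_self_of_mem hA.1.eigenvectorUnitary.2
  have hD : diagonal (((↑) : ℝ → ℂ) ∘ (Real.sqrt ∘ hA.1.eigenvalues)) *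
      diagonal ((↑) ∘ (Real.sqrt ∘ hA.1.eigenvalues)) =
      diagonal (RCLike.ofReal ∘ hA.1.eigenvalues) := by
    rw [diagonal_mul_diagonal]
    congr 1
    funext i
    simp only [Function.comp_apply]
    rw [← Complex.ofReal_mul, Real.mul_self_sqrt (hA.eigenvalues_nonneg i)]
    rfl
  calc _ = hA.1.eigenvectorUnitary.1 * diagonal ((↑) ∘ (Real.sqrt ∘ hA.1.eigenvalues)) *
      ((star hA.1.eigenvectorUnitary : Matrix n n ℂ) * hA.1.eigenvectorUnitary.1) *
      diagonal ((↑) ∘ (Real.sqrt ∘ hA.1.eigenvalues)) *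
      (star hA.1.eigenvectorUnitary : Matrix n n ℂ) := by simp only [Matrix.mul_assoc]
    _ = _ := by rw [hU, Matrix.mul_one, Matrix.mul_assoc _ (diagonal _) (diagonal _), hD]

theorem halpern_unitary {p n : ℕ}
    (V : Matrix (Fin p) (Fin n) ℂ)
    (hp : ((1 : Matrix (Fin p) (Fin p) ℂ) + V * Vᴴ).PosSemidef)
    (hn : ((1 : Matrix (Fin n) (Fin n) ℂ) + Vᴴ * V).PosSemidef) :
    Matrix.fromBlocks
      (hp.sqrt)⁻¹ (V * (hn.sqrt)⁻¹)
      (-(Vᴴ * (hp.sqrt)⁻¹)) (hn.sqrt)⁻¹ ∈ Matrix.unitaryGroup (Fin p ⊕ Fin n) ℂ := by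
  set S := hp.sqrt with hSdef
  set T := hn.sqrt with hTdef
  have hSH : Sᴴ = S := hp.sqrt_conjTranspose_self'
  have hTH : Tᴴ = T := hn.sqrt_conjTranspose_self'
  have hSS : S * S = 1 + V * Vᴴ := hp.sqrt_mul_self'
  have hTT : T * T = 1 + Vᴴ * V := hn.sqrt_mul_self'
  have hpd : ((1 : Matrix (Fin p) (Fin p) ℂ) + V * Vᴴ).PosDef :=
    Matrix.PosDef.add_posSemidef Matrix.PosDef.one (posSemidef_self_mul_conjTranspose V)
  have hnd : ((1 : Matrix (Fin n) (Fin n) ℂ) + Vᴴ * V).PosDef :=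
    Matrix.PosDef.add_posSemidef Matrix.PosDef.one (posSemidef_conjTranspose_mul_self V)
  have hSu : IsUnit S := by
    rw [Matrix.isUnit_iff_isUnit_det]
    have : IsUnit (S.det * S.det) := by
      rw [← Matrix.det_mul, hSS, ← Matrix.isUnit_iff_isUnit_det]
      exact hpd.isUnit
    exact isUnit_of_mul_isUnit_left this
  have hTu : IsUnit T := by
    rw [Matrix.isUnit_iff_isUnit_det]
    have : IsUnit (T.det * T.det) := by
      rw [← Matrix.det_mul, hTT, ← Matrix.isUnit_iff_isUnit_det]
      exact hnd.isUnit
    exact isUnit_of_mul_isUnit_left this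
  haveI := hSu.invertible
  haveI := hTu.invertible
  have hSiH : (S⁻¹)ᴴ = S⁻¹ := by rw [Matrix.conjTranspose_nonsing_inv, hSH]
  have hTiH : (T⁻¹)ᴴ = T⁻¹ := by rw [Matrix.conjTranspose_nonsing_inv, hTH]
  rw [Matrix.mem_unitaryGroup_iff', Matrix.star_eq_conjTranspose,
    Matrix.fromBlocks_conjTranspose, Matrix.fromBlocks_multiply, ← Matrix.fromBlocks_one]
  have keyS : S⁻¹ * (1 + V * Vᴴ) * S⁻¹ = 1 := by
    rw [← hSS, show S⁻¹ * (S * S) * S⁻¹ = (S⁻¹ * S) * (S * S⁻¹) by noncomm_ring,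
      Matrix.mul_inv_of_invertible, Matrix.inv_mul_of_invertible, Matrix.mul_one]
  have keyT : T⁻¹ * (1 + Vᴴ * V) * T⁻¹ = 1 := by
    rw [← hTT, show T⁻¹ * (T * T) * T⁻¹ = (T⁻¹ * T) * (T * T⁻¹) by noncomm_ring,
      Matrix.mul_inv_of_invertible, Matrix.inv_mul_of_invertible, Matrix.mul_one]
  simp only [Matrix.conjTranspose_neg, Matrix.conjTranspose_mul,
    Matrix.conjTranspose_conjTranspose, hSiH, hTiH, Matrix.neg_mul, Matrix.mul_neg, neg_neg]
  rw [Matrix.fromBlocks_inj]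
  refine ⟨?_, ?_, ?_, ?_⟩
  · rw [← keyS]; simp [Matrix.mul_add, Matrix.add_mul, Matrix.mul_one, Matrix.one_mul, Matrix.mul_assoc, add_comm]
  · simp [Matrix.mul_assoc]
  · simp [Matrix.mul_assoc]
  · rw [← keyT]; simp [Matrix.mul_add, Matrix.add_mul, Matrix.mul_one, Matrix.one_mul, Matrix.mul_assoc, add_comm]
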